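/- For ψ̂₁(ω) := sqrt(b(2ω)^2 + b(ω)^2), one has the partition of unity identity: for every ω with |ω| > 1, the sum over j ≥ 0 of |ψ̂₁(2^{-2j} ω)|^2 equals 1. -/
import Mathlib

noncomputable def meyerV (x : ℝ) : ℝ :=
  if x < 0 then 0
  else if x ≤ 1 then 35*x^4 - 84*x^5 + 70*x^6 - 20*x^7
  else 1

noncomputable def meyerB (x : ℝ) : ℝ :=
  if 1 ≤ |x| ∧ |x| ≤ 2 then Real.sin (Real.pi / 2 * meyerV (|x| - 1))
  else if 2 < |x| ∧ |x| ≤ 4 then Real.cos (Real.pi / 2 * meyerV (|x| / 2 - 1))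
  else 0

noncomputable def psi1hat (ω : ℝ) : ℝ := Real.sqrt (meyerB (2*ω) ^ 2 + meyerB ω ^ 2)

lemma meyerB_zero_of_le_one {y : ℝ} (h : |y| ≤ 1) : meyerB y = 0 := by
  rw [meyerB]
  rcases lt_or_eq_of_le h with h' | h'
  · rw [if_neg (by push_neg; intro h1; linarith), if_neg (by push_neg; intro h1; linarith)]
  · rw [if_pos ⟨le_of_eq h'.symm, by linarith⟩, h', meyerV]
    norm_num

lemma meyerB_zero_of_gt {y : ℝ} (h : 4 < |y|) : meyerB y = 0 := by
  rw [meyerB, if_neg (by push_neg; intro h1; linarith), if_neg (by push_neg; intro h1; linarith)]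

lemma meyerB_key {x : ℝ} (h2 : 2 < |x|) (h4 : |x| ≤ 4) :
    meyerB x ^ 2 + meyerB (x/2) ^ 2 = 1 := by
  have hx2 : |x/2| = |x|/2 := by rw [abs_div]; norm_num
  rw [meyerB, meyerB, hx2]
  rw [if_neg (by push_neg; intro h1; linarith), if_pos ⟨h2, h4⟩,
    if_pos ⟨by linarith, by linarith⟩]
  rw [show |x|/2 - 1 = |x|/2 - 1 from rfl]
  exact Real.cos_sq_add_sin_sq _

lemma psi1hat_sq (t : ℝ) : |psi1hat t| ^ 2 = meyerB (2*t) ^ 2 + meyerB t ^ 2 := by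
  rw [psi1hat, abs_of_nonneg (Real.sqrt_nonneg _),
    Real.sq_sqrt (by positivity)]

lemma two_lb {a : ℝ} {b e c : ℤ} (h : (2:ℝ)^b < a) (he : c ≤ e + b) :
    (2:ℝ)^c < 2^e * a := by
  calc (2:ℝ)^c ≤ 2^(e+b) := zpow_le_zpow_right₀ one_le_two he
  _ = 2^e * 2^b := zpow_add₀ two_ne_zero _ _
  _ < 2^e * a := mul_lt_mul_of_pos_left h (zpow_pos two_pos _)

lemma two_ub {a : ℝ} {b e c : ℤ} (h : a ≤ (2:ℝ)^b) (he : e + b ≤ c) :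
    (2:ℝ)^e * a ≤ 2^c := by
  calc (2:ℝ)^e * a ≤ 2^e * 2^b := mul_le_mul_of_nonneg_left h (zpow_pos two_pos _).le
  _ = 2^(e+b) := (zpow_add₀ two_ne_zero _ _).symm
  _ ≤ 2^c := zpow_le_zpow_right₀ one_le_two he

lemma exists_n {a : ℝ} (ha : 1 < a) : ∃ n : ℕ, (2:ℝ)^n < a ∧ a ≤ 2^(n+1) := by
  obtain ⟨m, hm⟩ := pow_unbounded_of_one_lt a (one_lt_two (α := ℝ))
  have hex : ∃ kk : ℕ, a ≤ (2:ℝ)^(kk+1) :=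
    ⟨m, hm.le.trans (pow_le_pow_right₀ one_le_two (Nat.le_succ m))⟩
  refine ⟨Nat.find hex, ?_, Nat.find_spec hex⟩
  rcases Nat.eq_zero_or_pos (Nat.find hex) with h0 | hp
  · rw [h0]; simpa using ha
  · obtain ⟨p, hp'⟩ := Nat.exists_eq_succ_of_ne_zero hp.ne'
    have hmin := Nat.find_min hex (m := p) (by omega)
    push_neg at hmin
    rw [hp']
    exact hmin

theorem psi1hat_partition_of_unity (ω : ℝ) (hω : 1 < |ω|) :
    ∑' j : ℕ, |psi1hat ((2:ℝ) ^ (-(2 * (j:ℤ))) * ω)| ^ 2 = 1 := by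
  set a := |ω| with ha_def
  have habs : ∀ e : ℤ, |(2:ℝ)^e * ω| = 2^e * a := fun e => by
    rw [abs_mul, abs_of_pos (zpow_pos two_pos e)]
  have habs2 : ∀ e : ℤ, |2 * ((2:ℝ)^e * ω)| = 2^(e+1) * a := fun e => by
    rw [abs_mul, abs_two, habs, ← mul_assoc, zpow_add₀ (two_ne_zero (α := ℝ))]
    ring
  obtain ⟨n, hn1, hn2⟩ := exists_n hω
  have hn1' : (2:ℝ)^(n:ℤ) < a := by rw [zpow_natCast]; exact hn1
  have hn2' : a ≤ (2:ℝ)^((n:ℤ)+1) := by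
    rw [show ((n:ℤ)+1) = ((n+1:ℕ):ℤ) by push_cast; ring, zpow_natCast]; exact hn2
  -- obtain k with 2^(2k) < a ≤ 2^(2k+2), plus parity info
  obtain ⟨k, hk⟩ : ∃ k : ℕ, n = 2*k ∨ n = 2*k+1 := by
    rcases Nat.even_or_odd n with ⟨k, h⟩ | ⟨k, h⟩
    exacts [⟨k, Or.inl (by omega)⟩, ⟨k, Or.inr (by omega)⟩]
  have hk1 : (2:ℝ)^(2*(k:ℤ)) < a := by
    refine lt_of_le_of_lt ?_ hn1'
    exact zpow_le_zpow_right₀ one_le_two (by omega)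
  have hk2 : a ≤ (2:ℝ)^(2*(k:ℤ)+2) := by
    refine hn2'.trans ?_
    exact zpow_le_zpow_right₀ one_le_two (by omega)
  -- vanishing outside {k, k+1}
  have hzero : ∀ j ∉ ({k, k+1} : Finset ℕ),
      |psi1hat ((2:ℝ) ^ (-(2 * (j:ℤ))) * ω)| ^ 2 = 0 := by
    intro j hj
    simp only [Finset.mem_insert, Finset.mem_singleton] at hj
    push_neg at hj
    rw [psi1hat_sq]
    rcases lt_or_ge j k with hjk | hjk
    · have hjk' : (j:ℤ) < (k:ℤ) := by exact_mod_cast hjk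
      have e1 : meyerB (2 * ((2:ℝ)^(-(2*(j:ℤ))) * ω)) = 0 := by
        apply meyerB_zero_of_gt
        rw [habs2]
        calc (4:ℝ) = 2^(2:ℤ) := by norm_num
        _ < _ := two_lb hk1 (by omega)
      have e2 : meyerB ((2:ℝ)^(-(2*(j:ℤ))) * ω) = 0 := by
        apply meyerB_zero_of_gt
        rw [habs]
        calc (4:ℝ) = 2^(2:ℤ) := by norm_num
        _ < _ := two_lb hk1 (by omega)
      rw [e1, e2]; ring
    · have hjk' : (k:ℤ) + 2 ≤ (j:ℤ) := by
        have h1 : j ≠ k := hj.1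
        have h2 : j ≠ k + 1 := hj.2
        omega
      have e1 : meyerB (2 * ((2:ℝ)^(-(2*(j:ℤ))) * ω)) = 0 := by
        apply meyerB_zero_of_le_one
        rw [habs2]
        calc (2:ℝ)^(-(2*(j:ℤ))+1) * a ≤ 2^(0:ℤ) := two_ub hk2 (by omega)
        _ = 1 := zpow_zero 2
      have e2 : meyerB ((2:ℝ)^(-(2*(j:ℤ))) * ω) = 0 := by
        apply meyerB_zero_of_le_one
        rw [habs]
        calc (2:ℝ)^(-(2*(j:ℤ))) * a ≤ 2^(0:ℤ) := two_ub hk2 (by omega)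
        _ = 1 := zpow_zero 2
      rw [e1, e2]; ring
  rw [tsum_eq_sum hzero, Finset.sum_insert (by simp), Finset.sum_singleton,
    psi1hat_sq, psi1hat_sq]
  push_cast
  rcases hk with hke | hko
  · -- even case: n = 2k, so 2^(2k) < a ≤ 2^(2k+1)
    have hk2e : a ≤ (2:ℝ)^(2*(k:ℤ)+1) := by
      refine hn2'.trans (zpow_le_zpow_right₀ one_le_two (by omega))
    have e1 : meyerB (2 * ((2:ℝ)^(-(2*((k:ℤ)+1))) * ω)) = 0 := by
      apply meyerB_zero_of_le_one
      rw [habs2]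
      calc (2:ℝ)^(-(2*((k:ℤ)+1))+1) * a ≤ 2^(0:ℤ) := two_ub hk2e (by omega)
      _ = 1 := zpow_zero 2
    have e2 : meyerB ((2:ℝ)^(-(2*((k:ℤ)+1))) * ω) = 0 := by
      apply meyerB_zero_of_le_one
      rw [habs]
      calc (2:ℝ)^(-(2*((k:ℤ)+1))) * a ≤ 2^(0:ℤ) := two_ub hk2e (by omega)
      _ = 1 := zpow_zero 2
    have hkey := meyerB_key (x := 2 * ((2:ℝ)^(-(2*(k:ℤ))) * ω)) ?_ ?_
    · rw [show (2 * ((2:ℝ)^(-(2*(k:ℤ))) * ω))/2 = (2:ℝ)^(-(2*(k:ℤ))) * ω by ring] at hkey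
      rw [e1, e2]
      linarith [hkey]
    · rw [habs2]
      calc (2:ℝ) = 2^(1:ℤ) := by norm_num
      _ < _ := two_lb hk1 (by omega)
    · rw [habs2]
      calc (2:ℝ)^(-(2*(k:ℤ))+1) * a ≤ 2^(2:ℤ) := two_ub hk2e (by omega)
      _ ≤ 4 := by norm_num
  · -- odd case: n = 2k+1, so 2^(2k+1) < a ≤ 2^(2k+2)
    have hk1o : (2:ℝ)^(2*(k:ℤ)+1) < a := by
      refine lt_of_le_of_lt (zpow_le_zpow_right₀ one_le_two (by omega)) hn1'
    have e1 : meyerB (2 * ((2:ℝ)^(-(2*(k:ℤ))) * ω)) = 0 := by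
      apply meyerB_zero_of_gt
      rw [habs2]
      calc (4:ℝ) = 2^(2:ℤ) := by norm_num
      _ < _ := two_lb hk1o (by omega)
    have e2 : meyerB ((2:ℝ)^(-(2*((k:ℤ)+1))) * ω) = 0 := by
      apply meyerB_zero_of_le_one
      rw [habs]
      calc (2:ℝ)^(-(2*((k:ℤ)+1))) * a ≤ 2^(0:ℤ) := two_ub hk2 (by omega)
      _ = 1 := zpow_zero 2
    have hkey := meyerB_key (x := (2:ℝ)^(-(2*(k:ℤ))) * ω) ?_ ?_
    · have hx2 : 2 * ((2:ℝ)^(-(2*((k:ℤ)+1))) * ω) = ((2:ℝ)^(-(2*(k:ℤ))) * ω)/2 := by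
        have h1 : (2:ℝ)^(-(2*((k:ℤ)+1))) = (2:ℝ)^(-(2*(k:ℤ))) * (1/4) := by
          rw [show (-(2*((k:ℤ)+1))) = -(2*(k:ℤ)) + (-2) by ring,
            zpow_add₀ (two_ne_zero (α := ℝ))]
          norm_num
        rw [h1]; ring
      rw [hx2] at *
      rw [e1, e2]
      linarith [hkey]
    · rw [habs]
      calc (2:ℝ) = 2^(1:ℤ) := by norm_num
      _ < _ := two_lb hk1o (by omega)
    · rw [habs]
      calc (2:ℝ)^(-(2*(k:ℤ))) * a ≤ 2^(2:ℤ) := two_ub hk2 (by omega)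
      _ ≤ 4 := by norm_num
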